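/- Let (U, W, B) be a linear system over ℂ and f : U ≃ W a linear equivalence satisfying B(f⁻¹(w), f(u)) = B(u, w) for all u ∈ U, w ∈ W (i.e. the system is self-dual via f). Set F := j_W ∘ f : U → U*, an injective linear map with range W̃. Then for every φ ∈ gl^M_{U,W} the endomorphism τ(φ) := −F⁻¹ ∘ φ* ∘ F of U is well defined and lies in gl^M_{U,W}, the map τ is a Lie algebra automorphism of gl^M_{U,W} with τ ∘ τ = id, and F intertwines the twisted action with the dual action: F(τ(φ)(u)) = −φ*(F(u)) for all u ∈ U. -/

import Mathlib

open TensorProduct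

variable {U W : Type*} [AddCommGroup U] [Module ℂ U] [AddCommGroup W] [Module ℂ W]

attribute [local instance 100] LieRing.ofAssociativeRing

/-- The Mackey Lie algebra `gl^M_{U,W}`: all `φ ∈ End ℂ U` whose dual map preserves
`W̃ = range (B.flip) ⊆ U*`. -/
noncomputable def glMackey (B : U →ₗ[ℂ] W →ₗ[ℂ] ℂ) :
    LieSubalgebra ℂ (Module.End ℂ U) where
  carrier := {φ | ∀ ξ ∈ LinearMap.range B.flip, φ.dualMap ξ ∈ LinearMap.range B.flip}
  add_mem' := by
    intro a b ha hb ξ hξ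
    have h : (a + b).dualMap ξ = a.dualMap ξ + b.dualMap ξ := by ext x; simp
    rw [h]
    exact Submodule.add_mem _ (ha ξ hξ) (hb ξ hξ)
  zero_mem' := by
    intro ξ hξ
    have h : (0 : Module.End ℂ U).dualMap ξ = 0 := by ext x; simp
    rw [h]; exact Submodule.zero_mem _
  smul_mem' := by
    intro c a ha ξ hξ
    have h : (c • a).dualMap ξ = c • a.dualMap ξ := by ext x; simp
    rw [h]
    exact Submodule.smul_mem _ _ (ha ξ hξ)
  lie_mem' := by
    intro a b ha hb ξ hξ
    have h : (⁅a, b⁆ : Module.End ℂ U).dualMap ξ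
        = b.dualMap (a.dualMap ξ) - a.dualMap (b.dualMap ξ) := by
      ext x; simp [Module.End.lie_apply]
    rw [h]
    exact Submodule.sub_mem _ (hb _ (ha ξ hξ)) (ha _ (hb ξ hξ))

/-- Let `(U, W, B)` be a linear system which is self-dual via `f : U ≃ W`, i.e.
`B (f⁻¹ w) (f u) = B u w`.  With `F := j_W ∘ f : U → U*` (so `F u = B (·) (f u)`), the
map `τ(φ) = −F⁻¹ ∘ φ* ∘ F` is a well-defined involutive Lie algebra automorphism of
`gl^M_{U,W}`, intertwined by `F` with the dual action: `F (τ(φ) u) = −φ*(F u)`, i.e.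
`B x (f (τ(φ) u)) = −B (φ x) (f u)` for all `x, u ∈ U`. -/
theorem stmt_13 (B : U →ₗ[ℂ] W →ₗ[ℂ] ℂ)
    (hB1 : ∀ u : U, (∀ w : W, B u w = 0) → u = 0)
    (hB2 : ∀ w : W, (∀ u : U, B u w = 0) → w = 0)
    (f : U ≃ₗ[ℂ] W) (hf : ∀ (u : U) (w : W), B (f.symm w) (f u) = B u w) :
    ∃ τ : ↥(glMackey B) ≃ₗ⁅ℂ⁆ ↥(glMackey B),
      (∀ φ : ↥(glMackey B), τ (τ φ) = φ) ∧
      (∀ (φ : ↥(glMackey B)) (u x : U),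
        B x (f ((τ φ : Module.End ℂ U) u)) = - B ((φ : Module.End ℂ U) x) (f u)) := by
  classical
  -- the symmetric form b u v = B u (f v)
  let b : U →ₗ[ℂ] U →ₗ[ℂ] ℂ := B.compl₂ f.toLinearMap
  have hbapp : ∀ u v : U, b u v = B u (f v) := fun _ _ => rfl
  have hsymm : ∀ u v : U, b u v = b v u := by
    intro u v
    have h := hf v (f u)
    rw [f.symm_apply_apply] at h
    exact h
  have hnd : ∀ v : U, (∀ x, b x v = 0) → v = 0 := by
    intro v h
    have hfv : f v = 0 := hB2 _ (fun x => h x)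
    apply f.injective
    simp [hfv]
  have huniq : ∀ v v' : U, (∀ x, b x v = b x v') → v = v' := by
    intro v v' h
    have : v - v' = 0 := by
      apply hnd
      intro x
      rw [map_sub, h x, sub_self]
    exact sub_eq_zero.mp this
  -- existence of the twisted endomorphism pointwise
  have hexists : ∀ (φ : ↥(glMackey B)) (u : U),
      ∃ v : U, ∀ x, b x v = - b ((φ : Module.End ℂ U) x) u := by
    intro φ u
    have hm : (φ : Module.End ℂ U).dualMap (B.flip (f u)) ∈ LinearMap.range B.flip :=
      φ.2 (B.flip (f u)) ⟨f u, rfl⟩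
    obtain ⟨w, hw⟩ := hm
    refine ⟨-(f.symm w), ?_⟩
    intro x
    have h1 : B x w = B ((φ : Module.End ℂ U) x) (f u) := LinearMap.congr_fun hw x
    show B x (f (-(f.symm w))) = -(B ((φ : Module.End ℂ U) x) (f u))
    rw [map_neg, f.apply_symm_apply, map_neg]
    exact congrArg Neg.neg h1
  choose t ht using hexists
  -- basic rewriting lemmas
  have key : ∀ (φ ψ : ↥(glMackey B)) (u x : U),
      b x (t φ (t ψ u)) = b ((ψ : Module.End ℂ U) ((φ : Module.End ℂ U) x)) u := by
    intro φ ψ u x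
    rw [ht, ht, neg_neg]
  -- linearity of t φ
  have hadd : ∀ (φ : ↥(glMackey B)) (u u' : U), t φ (u + u') = t φ u + t φ u' := by
    intro φ u u'
    apply huniq
    intro x
    simp only [ht, map_add, LinearMap.add_apply, neg_add]
  have hsmul : ∀ (φ : ↥(glMackey B)) (c : ℂ) (u : U), t φ (c • u) = c • t φ u := by
    intro φ c u
    apply huniq
    intro x
    simp only [ht, map_smul, LinearMap.smul_apply, smul_neg, smul_eq_mul, mul_neg]
  let Tlin : ↥(glMackey B) → Module.End ℂ U := fun φ =>
    { toFun := t φ, map_add' := hadd φ, map_smul' := hsmul φ }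
  have hTlin : ∀ φ u, Tlin φ u = t φ u := fun _ _ => rfl
  -- membership in the Mackey algebra
  have hmem : ∀ φ, Tlin φ ∈ glMackey B := by
    intro φ ξ hξ
    obtain ⟨w, rfl⟩ := hξ
    refine ⟨-(f ((φ : Module.End ℂ U) (f.symm w))), ?_⟩
    apply LinearMap.ext
    intro x
    show B x (-(f ((φ : Module.End ℂ U) (f.symm w)))) = B (t φ x) w
    have e1 : B (t φ x) w = b (t φ x) (f.symm w) := by
      rw [hbapp, f.apply_symm_apply]
    have e2 : b (t φ x) (f.symm w) = -(b x ((φ : Module.End ℂ U) (f.symm w))) := by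
      rw [hsymm (t φ x) (f.symm w), ht, hsymm]
    rw [e1, e2, map_neg]
    exact congrArg Neg.neg (hbapp x _).symm
  let τ0 : ↥(glMackey B) → ↥(glMackey B) := fun φ => ⟨Tlin φ, hmem φ⟩
  have hcoe : ∀ φ (u : U), ((τ0 φ : ↥(glMackey B)) : Module.End ℂ U) u = t φ u :=
    fun _ _ => rfl
  -- involutivity
  have hinv : ∀ φ, τ0 (τ0 φ) = φ := by
    intro φ
    apply Subtype.ext
    apply LinearMap.ext
    intro u
    apply huniq
    intro x
    show b x (t (τ0 φ) u) = b x ((φ : Module.End ℂ U) u)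
    rw [ht]
    show -(b (t φ x) u) = b x ((φ : Module.End ℂ U) u)
    rw [hsymm (t φ x) u, ht, neg_neg, hsymm]
  -- additivity
  have hadd2 : ∀ φ ψ, τ0 (φ + ψ) = τ0 φ + τ0 ψ := by
    intro φ ψ
    apply Subtype.ext
    apply LinearMap.ext
    intro u
    apply huniq
    intro x
    show b x (t (φ + ψ) u) = b x (t φ u + t ψ u)
    have e1 : ((φ + ψ : ↥(glMackey B)) : Module.End ℂ U) x
        = (φ : Module.End ℂ U) x + (ψ : Module.End ℂ U) x := rfl
    rw [ht, e1, map_add, LinearMap.add_apply, map_add, ht, ht, neg_add]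
  have hsmul2 : ∀ (c : ℂ) φ, τ0 (c • φ) = c • τ0 φ := by
    intro c φ
    apply Subtype.ext
    apply LinearMap.ext
    intro u
    apply huniq
    intro x
    show b x (t (c • φ) u) = b x (c • t φ u)
    have e1 : ((c • φ : ↥(glMackey B)) : Module.End ℂ U) x
        = c • ((φ : Module.End ℂ U) x) := rfl
    rw [ht, e1, map_smul, LinearMap.smul_apply, map_smul, ht, smul_neg]
  -- bracket
  have hlie : ∀ φ ψ, τ0 ⁅φ, ψ⁆ = ⁅τ0 φ, τ0 ψ⁆ := by
    intro φ ψ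
    apply Subtype.ext
    apply LinearMap.ext
    intro u
    apply huniq
    intro x
    show b x (t ⁅φ, ψ⁆ u) = b x (t φ (t ψ u) - t ψ (t φ u))
    have e1 : ((⁅φ, ψ⁆ : ↥(glMackey B)) : Module.End ℂ U) x
        = (φ : Module.End ℂ U) ((ψ : Module.End ℂ U) x)
          - (ψ : Module.End ℂ U) ((φ : Module.End ℂ U) x) := rfl
    rw [ht, e1, map_sub, LinearMap.sub_apply, map_sub, key, key, neg_sub]
  refine ⟨{ toFun := τ0, map_add' := hadd2,
            map_smul' := fun c φ => hsmul2 c φ,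
            map_lie' := fun {x y} => hlie x y,
            invFun := τ0, left_inv := hinv, right_inv := hinv }, hinv, ?_⟩
  intro φ u x
  exact ht φ u x
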